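/- Let T be a spherically homogeneous rooted tree, let G ≤ Aut(T) be a weakly branch group, and let H₁, H₂ ≤ G be subgroups each of which is k-subnormal in G for some k ∈ ℕ, with [H₁, H₂] = 1. If H₂ is non-trivial, then there exists a vertex v of T such that H₁ ≤ St_G(v) and φ_v(H₁) = 1. -/

import Mathlib

open Equiv

namespace PaperDefs


/-! ### Spherically homogeneous rooted trees -/

variable (A : ℕ → Type)

/-- Vertices of the spherically homogeneous rooted tree determined by the
sequence of alphabets `A`: words `a₁a₂⋯aₙ` with `aᵢ ∈ A i`. -/
def Vertex : Type := Σ n : ℕ, ∀ i : Fin n, A i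

/-- The prefix relation on vertices. -/
def IsPref (v w : Vertex A) : Prop :=
  ∃ h : v.1 ≤ w.1, ∀ i : Fin v.1, v.2 i = w.2 (Fin.castLE h i)

/-- The automorphism group of the tree: permutations of the vertex set that
preserve the prefix relation. -/
def treeAut : Subgroup (Perm (Vertex A)) where
  carrier := {g | ∀ v w, IsPref A v w ↔ IsPref A (g v) (g w)}
  one_mem' := by intro v w; simp
  mul_mem' := by
    intro a b ha hb v w
    simpa [Equiv.Perm.mul_apply] using (hb v w).trans (ha (b v) (b w))
  inv_mem' := by
    intro a ha v w
    simpa using (ha (a⁻¹ v) (a⁻¹ w)).symm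

/-- The stabiliser of the vertex `v` in `G`. -/
def stG (G : Subgroup (Perm (Vertex A))) (v : Vertex A) : Subgroup (Perm (Vertex A)) :=
  G ⊓ MulAction.stabilizer (Perm (Vertex A)) v

/-- The rigid stabiliser of the vertex `v` in `G`: elements of `G` fixing every
vertex that does not have `v` as a prefix. -/
def rist (G : Subgroup (Perm (Vertex A))) (v : Vertex A) : Subgroup (Perm (Vertex A)) where
  carrier := {g | g ∈ G ∧ ∀ w, ¬ IsPref A v w → g w = w}
  one_mem' := ⟨G.one_mem, fun w _ => by simp⟩
  mul_mem' := by
    rintro a b ⟨haG, ha⟩ ⟨hbG, hb⟩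
    refine ⟨G.mul_mem haG hbG, fun w hw => ?_⟩
    simp [Equiv.Perm.mul_apply, hb w hw, ha w hw]
  inv_mem' := by
    rintro a ⟨haG, ha⟩
    refine ⟨G.inv_mem haG, fun w hw => ?_⟩
    conv_lhs => rw [← ha w hw]
    simp

/-- The rigid stabiliser of the `n`-th level: the subgroup generated by the rigid
stabilisers of the vertices of level `n`. -/
def ristLevel (G : Subgroup (Perm (Vertex A))) (n : ℕ) : Subgroup (Perm (Vertex A)) :=
  ⨆ (v : Vertex A) (_ : v.1 = n), rist A G v

/-- `G` acts spherically transitively: transitively on every level. -/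
def SphTrans (G : Subgroup (Perm (Vertex A))) : Prop :=
  ∀ v w : Vertex A, v.1 = w.1 → ∃ g ∈ G, g v = w

/-- `G ≤ Aut T` is a weakly branch group. -/
def IsWeaklyBranch (G : Subgroup (Perm (Vertex A))) : Prop :=
  G ≤ treeAut A ∧ SphTrans A G ∧ ∀ v : Vertex A, rist A G v ≠ ⊥

/-- `G ≤ Aut T` is a branch group. -/
def IsBranch (G : Subgroup (Perm (Vertex A))) : Prop :=
  IsWeaklyBranch A G ∧ ∀ n : ℕ, (ristLevel A G n).relIndex G ≠ 0

/-! ### Boundary of the tree -/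

/-- The boundary of the tree: infinite words. -/
def Boundary : Type := ∀ i : ℕ, A i

/-- The length-`n` prefix of a boundary point. -/
def bdryPrefix (ξ : Boundary A) (n : ℕ) : Vertex A := ⟨n, fun i => ξ i⟩

/-- The support of a subgroup `H` on the boundary: boundary points moved by some
element of `H` (a boundary point is moved by a tree automorphism iff one of its
finite prefixes is moved). -/
def supp (H : Subgroup (Perm (Vertex A))) : Set (Boundary A) :=
  {ξ | ∃ h ∈ H, ∃ n : ℕ, h (bdryPrefix A ξ n) ≠ bdryPrefix A ξ n}

/-! ### Sections / projections -/

/-- The shifted alphabet sequence, describing the subtree rooted at a vertex of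
level `n`. -/
def shift (n : ℕ) : ℕ → Type := fun i => A (i + n)

/-- Concatenation of a vertex `v` of level `n` with a vertex of the subtree `T_v`
(viewed in the shifted tree). -/
def concat (n : ℕ) (v : Vertex A) (hv : v.1 = n) (w : Vertex (shift A n)) : Vertex A :=
  ⟨n + w.1, fun i =>
    if h : (i : ℕ) < n then v.2 ⟨(i : ℕ), by omega⟩
    else cast (congrArg A (by have := i.isLt; omega : (i : ℕ) - n + n = (i : ℕ)))
      (w.2 ⟨(i : ℕ) - n, by have := i.isLt; omega⟩)⟩

/-- `projStab A G n v hv` is `G_v = φ_v(St_G(v))`, the image under the projection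
`φ_v` of the stabiliser of `v` in `G`, realised as a subgroup of the automorphisms
of the subtree `T_v` (identified with the tree on the shifted alphabet sequence):
it consists of those `σ` for which some `g ∈ G` stabilises `v` and satisfies
`g (v·w) = v·(σ w)` for every vertex `w` of the subtree. -/
def projStab (G : Subgroup (Perm (Vertex A))) (n : ℕ) (v : Vertex A) (hv : v.1 = n) :
    Subgroup (Perm (Vertex (shift A n))) where
  carrier := {σ | ∃ g ∈ G, g v = v ∧ ∀ w, g (concat A n v hv w) = concat A n v hv (σ w)}
  one_mem' := ⟨1, G.one_mem, by simp, fun w => by simp⟩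
  mul_mem' := by
    rintro σ τ ⟨g, hgG, hgv, hg⟩ ⟨g', hg'G, hg'v, hg'⟩
    refine ⟨g * g', G.mul_mem hgG hg'G, by simp [Equiv.Perm.mul_apply, hg'v, hgv], fun w => ?_⟩
    simp [Equiv.Perm.mul_apply, hg' w, hg (τ w)]
  inv_mem' := by
    rintro σ ⟨g, hgG, hgv, hg⟩
    refine ⟨g⁻¹, G.inv_mem hgG, by simpa using (congrArg (⇑g⁻¹) hgv).symm, fun w => ?_⟩
    have h1 : g (concat A n v hv (σ⁻¹ w)) = concat A n v hv w := by
      rw [hg (σ⁻¹ w)]; simp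
    calc g⁻¹ (concat A n v hv w) = g⁻¹ (g (concat A n v hv (σ⁻¹ w))) := by rw [h1]
      _ = concat A n v hv (σ⁻¹ w) := by simp

/-! ### Group-theoretic notions -/

/-- `H` is a normal subgroup of `K` (both being subgroups of an ambient group). -/
def NormalIn {P : Type*} [Group P] (H K : Subgroup P) : Prop :=
  H ≤ K ∧ ∀ k ∈ K, ∀ h ∈ H, k * h * k⁻¹ ∈ H

/-- `H` is `k`-subnormal in `G`: there is a chain `H = c k ⊴ ⋯ ⊴ c 0 = G`. -/
def SubnormalIn {P : Type*} [Group P] (H G : Subgroup P) (k : ℕ) : Prop :=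
  ∃ c : ℕ → Subgroup P, c 0 = G ∧ c k = H ∧ ∀ i < k, NormalIn (c (i + 1)) (c i)

/-- The iterated derived subgroup `H⁽ᵏ⁾` of a subgroup `H` of an ambient group. -/
def derivedIter {P : Type*} [Group P] (H : Subgroup P) : ℕ → Subgroup P
  | 0 => H
  | k + 1 => ⁅derivedIter H k, derivedIter H k⁆

/-- The class `𝓜𝓕` of groups all of whose maximal subgroups have finite index. -/
def MF (Γ : Type*) [Group Γ] : Prop :=
  ∀ M : Subgroup Γ, IsCoatom M → M.index ≠ 0

/-- Every proper quotient of `Γ` belongs to `𝓜𝓕`. -/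
def QuotientsMF (Γ : Type*) [Group Γ] : Prop :=
  ∀ (N : Subgroup Γ) [N.Normal], N ≠ ⊥ → MF (Γ ⧸ N)

/-- `H` is a prodense subgroup of `Γ`: `HN = Γ` for every nontrivial normal `N ⊴ Γ`. -/
def Prodense {Γ : Type*} [Group Γ] (H : Subgroup Γ) : Prop :=
  ∀ N : Subgroup Γ, N.Normal → N ≠ ⊥ → H ⊔ N = ⊤

/-- `H` is a prodense subgroup of `G`, both being subgroups of an ambient group:
`H ≤ G` and `HN = G` for every nontrivial subgroup `N ≤ G` normal in `G`. -/
def ProdenseIn {P : Type*} [Group P] (H G : Subgroup P) : Prop :=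
  H ≤ G ∧ ∀ N : Subgroup P, N ≤ G → NormalIn N G → N ≠ ⊥ → H ⊔ N = G

/-- `M` is a maximal subgroup of `G` (both subgroups of an ambient group). -/
def MaximalIn {P : Type*} [Group P] (M G : Subgroup P) : Prop :=
  M < G ∧ ∀ K : Subgroup P, M < K → K ≤ G → K = G


/-! ### Auxiliary lemmas -/

open scoped commutatorElement

section Aux

variable {A : ℕ → Type}

lemma isPref_refl (v : Vertex A) : IsPref A v v := ⟨le_rfl, fun _ => rfl⟩

lemma isPref_trans {u v w : Vertex A} (h1 : IsPref A u v) (h2 : IsPref A v w) :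
    IsPref A u w :=
  ⟨le_trans h1.1 h2.1, fun i => (h1.2 i).trans (h2.2 (Fin.castLE h1.1 i))⟩

lemma pref_eq_of_length_eq {a b c : Vertex A} (ha : IsPref A a c) (hb : IsPref A b c)
    (h : a.1 = b.1) : a = b := by
  obtain ⟨n, f⟩ := a
  obtain ⟨m, g⟩ := b
  dsimp at h
  subst h
  have hfg : f = g := funext fun i => (ha.2 i).trans (hb.2 i).symm
  rw [hfg]

/-- The length-`m` truncation of a vertex. -/
def trunc (v : Vertex A) (m : ℕ) (hm : m ≤ v.1) : Vertex A :=
  ⟨m, fun j => v.2 ⟨j.1, lt_of_lt_of_le j.2 hm⟩⟩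

lemma isPref_trunc (v : Vertex A) (m : ℕ) (hm : m ≤ v.1) : IsPref A (trunc v m hm) v :=
  ⟨hm, fun _ => rfl⟩

lemma length_apply {g : Perm (Vertex A)} (hg : g ∈ treeAut A) (v : Vertex A) :
    (g v).1 = v.1 := by
  have hF : ∀ m (hm : m ≤ v.1), (g (trunc v m hm)).1 ≤ (g v).1 := fun m hm =>
    ((hg _ v).mp (isPref_trunc v m hm)).1
  let F : Fin (v.1 + 1) → Fin ((g v).1 + 1) := fun i =>
    ⟨(g (trunc v i.1 (Nat.lt_succ_iff.mp i.2))).1, Nat.lt_succ_of_le (hF _ _)⟩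
  have hinj : Function.Injective F := by
    intro i j hij
    have h1 : g (trunc v i.1 (Nat.lt_succ_iff.mp i.2)) =
        g (trunc v j.1 (Nat.lt_succ_iff.mp j.2)) :=
      pref_eq_of_length_eq ((hg _ v).mp (isPref_trunc v _ _)) ((hg _ v).mp (isPref_trunc v _ _))
        (congrArg Fin.val hij)
    have h2 := g.injective h1
    exact Fin.ext (congrArg Sigma.fst h2)
  have hsurj : Function.Surjective F := by
    intro j
    have hj : j.1 ≤ (g v).1 := Nat.lt_succ_iff.mp j.2
    have hsv : IsPref A (g⁻¹ (trunc (g v) j.1 hj)) v := by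
      refine (hg (g⁻¹ (trunc (g v) j.1 hj)) v).mpr ?_
      rw [Perm.coe_inv, Equiv.apply_symm_apply]
      exact isPref_trunc (g v) j.1 hj
    refine ⟨⟨(g⁻¹ (trunc (g v) j.1 hj)).1, Nat.lt_succ_of_le hsv.1⟩, ?_⟩
    have htr : trunc v (g⁻¹ (trunc (g v) j.1 hj)).1 hsv.1 = g⁻¹ (trunc (g v) j.1 hj) :=
      pref_eq_of_length_eq (isPref_trunc v _ _) hsv rfl
    apply Fin.ext
    show (g (trunc v (g⁻¹ (trunc (g v) j.1 hj)).1 _)).1 = j.1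
    rw [htr, Perm.coe_inv, Equiv.apply_symm_apply]
    rfl
  have hcard := Fintype.card_of_bijective ⟨hinj, hsurj⟩
  simp only [Fintype.card_fin] at hcard
  omega

variable {G : Subgroup (Perm (Vertex A))}

lemma rist_le (x : Vertex A) : rist A G x ≤ G := fun _ hg => hg.1

lemma rist_fix {x : Vertex A} {g : Perm (Vertex A)} (hg : g ∈ rist A G x) {w : Vertex A}
    (hw : ¬ IsPref A x w) : g w = w := hg.2 w hw

lemma isPref_of_moved {x : Vertex A} {g : Perm (Vertex A)} (hg : g ∈ rist A G x)
    {w : Vertex A} (hw : g w ≠ w) : IsPref A x w :=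
  by_contra fun h => hw (hg.2 w h)

lemma rist_apply_self (hGa : G ≤ treeAut A) {x : Vertex A} {g : Perm (Vertex A)}
    (hg : g ∈ rist A G x) : g x = x := by
  by_contra h
  by_cases hp : IsPref A x (g x)
  · exact h (pref_eq_of_length_eq hp (isPref_refl _) (length_apply (hGa hg.1) x).symm).symm
  · have h2 := ((rist A G x).inv_mem hg).2 (g x) hp
    rw [Perm.coe_inv, Equiv.symm_apply_apply] at h2
    exact h h2.symm

lemma rist_mono {u x : Vertex A} (h : IsPref A u x) : rist A G x ≤ rist A G u := fun g hg =>
  ⟨hg.1, fun w hw => hg.2 w fun hxw => hw (isPref_trans h hxw)⟩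

lemma rist_commute (hGa : G ≤ treeAut A) {x y : Vertex A} (hxy : x ≠ y) (hl : x.1 = y.1)
    {a b : Perm (Vertex A)} (ha : a ∈ rist A G x) (hb : b ∈ rist A G y) : a * b = b * a := by
  have hax : a x = x := rist_apply_self hGa ha
  have hby : b y = y := rist_apply_self hGa hb
  ext w
  simp only [Perm.mul_apply]
  by_cases hx : IsPref A x w
  · have hyw : ¬ IsPref A y w := fun hy => hxy (pref_eq_of_length_eq hx hy hl)
    rw [rist_fix hb hyw]
    have hxaw : IsPref A x (a w) := hax ▸ (hGa ha.1 x w).mp hx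
    have hyaw : ¬ IsPref A y (a w) := fun hy => hxy (pref_eq_of_length_eq hxaw hy hl)
    rw [rist_fix hb hyaw]
  · rw [rist_fix ha hx]
    by_cases hy : IsPref A y w
    · have hybw : IsPref A y (b w) := hby ▸ (hGa hb.1 y w).mp hy
      have hxbw : ¬ IsPref A x (b w) := fun hx' => hxy (pref_eq_of_length_eq hx' hybw hl)
      rw [rist_fix ha hxbw]
    · rw [rist_fix hb hy, rist_fix ha hx]

lemma conj_mem_rist (hGa : G ≤ treeAut A) {h : Perm (Vertex A)} (hh : h ∈ G) {x : Vertex A}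
    {r : Perm (Vertex A)} (hr : r ∈ rist A G x) : h * r * h⁻¹ ∈ rist A G (h x) := by
  refine ⟨G.mul_mem (G.mul_mem hh hr.1) (G.inv_mem hh), fun w hw => ?_⟩
  have hnp : ¬ IsPref A x (h⁻¹ w) := fun hp => hw (by
    have h2 := (hGa hh x (h⁻¹ w)).mp hp
    rwa [Perm.coe_inv, Equiv.apply_symm_apply] at h2)
  simp only [Perm.mul_apply, rist_fix hr hnp]
  simp

lemma derivedIter_le_self {P : Type*} [Group P] (H : Subgroup P) :
    ∀ k, derivedIter H k ≤ H
  | 0 => le_rfl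
  | (k + 1) => by
      show ⁅derivedIter H k, derivedIter H k⁆ ≤ H
      refine le_trans (Subgroup.commutator_le.mpr ?_) (derivedIter_le_self H k)
      intro a ha b hb
      rw [commutatorElement_def]
      exact mul_mem (mul_mem (mul_mem ha hb) (inv_mem ha)) (inv_mem hb)

lemma derivedIter_mono {P : Type*} [Group P] {H K : Subgroup P} (h : H ≤ K) :
    ∀ k, derivedIter H k ≤ derivedIter K k
  | 0 => h
  | (k + 1) => Subgroup.commutator_mono (derivedIter_mono h k) (derivedIter_mono h k)

lemma derivedIter_antitone {P : Type*} [Group P] (H : Subgroup P) {k m : ℕ} (h : k ≤ m) :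
    derivedIter H m ≤ derivedIter H k := by
  induction m with
  | zero => simpa [Nat.le_zero.mp h] using le_rfl
  | succ m ih =>
    rcases Nat.lt_or_ge k (m + 1) with hlt | hge
    · exact le_trans (derivedIter_le_self (derivedIter H m) 1) (ih (by omega))
    · have : k = m + 1 := by omega
      subst this; exact le_rfl

lemma conj_mem_derivedIter_rist (hGa : G ≤ treeAut A) {h : Perm (Vertex A)} (hh : h ∈ G) :
    ∀ (k : ℕ) {x : Vertex A} {r : Perm (Vertex A)}, r ∈ derivedIter (rist A G x) k →
      h * r * h⁻¹ ∈ derivedIter (rist A G (h x)) k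
  | 0, x, r, hr => conj_mem_rist hGa hh hr
  | (k + 1), x, r, hr => by
      let f : Perm (Vertex A) →* Perm (Vertex A) := (MulAut.conj h).toMonoidHom
      have hmap : (derivedIter (rist A G x) k).map f ≤ derivedIter (rist A G (h x)) k := by
        rintro y ⟨s, hs, rfl⟩
        have := conj_mem_derivedIter_rist hGa hh k hs
        simpa [f, MulAut.conj_apply] using this
      have hr' : f r ∈ (⁅derivedIter (rist A G x) k, derivedIter (rist A G x) k⁆ :
          Subgroup (Perm (Vertex A))).map f := Subgroup.mem_map_of_mem f hr
      rw [Subgroup.map_commutator] at hr'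
      have hle := Subgroup.commutator_mono hmap hmap
      have := hle hr'
      show h * r * h⁻¹ ∈ ⁅derivedIter (rist A G (h x)) k, derivedIter (rist A G (h x)) k⁆
      simpa [f, MulAut.conj_apply] using this

end Aux


section Aux2

variable {A : ℕ → Type} {G : Subgroup (Perm (Vertex A))}

lemma SubnormalIn.le {P : Type*} [Group P] {H G : Subgroup P} {k : ℕ}
    (h : SubnormalIn H G k) : H ≤ G := by
  obtain ⟨c, hc0, hck, hnorm⟩ := h
  have key : ∀ i, i ≤ k → c i ≤ c 0 := by
    intro i
    induction i with
    | zero => intro _; exact le_rfl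
    | succ j ihj => intro hj; exact le_trans (hnorm j (by omega)).1 (ihj (by omega))
  rw [← hc0, ← hck]
  exact key k le_rfl

lemma comm_ne_one (hGa : G ≤ treeAut A) {h : Perm (Vertex A)} (hh : h ∈ G) {x : Vertex A}
    (hx : h x ≠ x) {r : Perm (Vertex A)} (hr : r ∈ rist A G x) {y : Vertex A}
    (hy : r y ≠ y) : ⁅h, r⁆ ≠ 1 := by
  have h2 : r⁻¹ y ≠ y := by
    intro e
    have h3 := congrArg r e
    rw [Perm.coe_inv, Equiv.apply_symm_apply] at h3
    exact hy h3.symm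
  have h4 : r (r⁻¹ y) ≠ r⁻¹ y := by
    rw [Perm.coe_inv, Equiv.apply_symm_apply]
    exact fun e => h2 e.symm
  have h3 : IsPref A x (r⁻¹ y) := isPref_of_moved hr h4
  have h5 : ¬ IsPref A (h x) (r⁻¹ y) := fun hp =>
    hx (pref_eq_of_length_eq hp h3 (length_apply (hGa hh) x))
  have h6 : (h * r * h⁻¹) (r⁻¹ y) = r⁻¹ y := rist_fix (conj_mem_rist hGa hh hr) h5
  intro e
  have h7 : (⁅h, r⁆ : Perm (Vertex A)) y = y := by rw [e]; rfl
  rw [commutatorElement_def] at h7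
  have h8 : (h * r * h⁻¹) (r⁻¹ y) = y := by
    simpa [Perm.mul_apply] using h7
  exact h2 (h6.symm.trans h8)

lemma exists_moved_of_ne_one {p : Perm (Vertex A)} (hp : p ≠ 1) : ∃ x, p x ≠ x := by
  by_contra hx
  push_neg at hx
  exact hp (Equiv.ext hx)

lemma exists_moving (hG : IsWeaklyBranch A G) :
    ∀ (k : ℕ) (u : Vertex A), ∃ h ∈ derivedIter (rist A G u) k, ∃ x, h x ≠ x := by
  intro k
  induction k with
  | zero =>
    intro u
    obtain ⟨h, hh, hne⟩ : ∃ h ∈ rist A G u, h ≠ 1 := by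
      by_contra hcon
      push_neg at hcon
      exact hG.2.2 u (le_bot_iff.mp fun g hg => Subgroup.mem_bot.mpr (hcon g hg))
    exact ⟨h, hh, exists_moved_of_ne_one hne⟩
  | succ k ih =>
    intro u
    obtain ⟨h, hh, x, hx⟩ := ih u
    have hxu : IsPref A u x := isPref_of_moved (derivedIter_le_self _ k hh) hx
    obtain ⟨r, hr, y, hy⟩ := ih x
    have hrS : r ∈ derivedIter (rist A G u) k := derivedIter_mono (rist_mono hxu) k hr
    have hhG : h ∈ G := (rist_le u) (derivedIter_le_self _ k hh)
    have hne := comm_ne_one hG.1 hhG hx (derivedIter_le_self _ k hr) hy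
    exact ⟨⁅h, r⁆, Subgroup.commutator_mem_commutator hh hrS, exists_moved_of_ne_one hne⟩

lemma subnormal_rist_le (hG : IsWeaklyBranch A G) :
    ∀ (k : ℕ) (H : Subgroup (Perm (Vertex A))), SubnormalIn H G k →
      ∀ h ∈ H, ∀ u, h u ≠ u → derivedIter (rist A G u) k ≤ H := by
  intro k
  induction k with
  | zero =>
    intro H hsub h hh u hu
    obtain ⟨c, hc0, hck, _⟩ := hsub
    have hHG : H = G := hck.symm.trans hc0
    rw [hHG]
    exact rist_le u
  | succ k ih =>
    intro H hsub h hh u hu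
    obtain ⟨c, hc0, hck, hnorm⟩ := hsub
    have hKsub : SubnormalIn (c k) G k := ⟨c, hc0, rfl, fun i hik => hnorm i (by omega)⟩
    have hHK : NormalIn H (c k) := hck ▸ hnorm k (Nat.lt_succ_self k)
    have hHleK : H ≤ c k := hHK.1
    have hS : derivedIter (rist A G u) k ≤ c k := ih (c k) hKsub h (hHleK hh) u hu
    have hhG : h ∈ G := hKsub.le (hHleK hh)
    show ⁅derivedIter (rist A G u) k, derivedIter (rist A G u) k⁆ ≤ H
    refine Subgroup.commutator_le.mpr ?_
    intro a ha b hb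
    have hlev : (h u).1 = u.1 := length_apply (hG.1 hhG) u
    have hune : u ≠ h u := fun e => hu e.symm
    have hcmem : h * b⁻¹ * h⁻¹ ∈ rist A G (h u) :=
      derivedIter_le_self _ k
        (conj_mem_derivedIter_rist hG.1 hhG k ((derivedIter (rist A G u) k).inv_mem hb))
    have hcomm : a * (h * b⁻¹ * h⁻¹) = (h * b⁻¹ * h⁻¹) * a :=
      rist_commute hG.1 hune hlev.symm (derivedIter_le_self _ k ha) hcmem
    have hn : b * h * b⁻¹ * h⁻¹ ∈ H := H.mul_mem (hHK.2 b (hS hb) h hh) (H.inv_mem hh)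
    have hm : a * (b * h * b⁻¹ * h⁻¹) * a⁻¹ * (b * h * b⁻¹ * h⁻¹)⁻¹ ∈ H :=
      H.mul_mem (hHK.2 a (hS ha) _ hn) (H.inv_mem hn)
    have hc' : (h * b⁻¹ * h⁻¹) * a⁻¹ = a⁻¹ * (h * b⁻¹ * h⁻¹) :=
      ((show Commute a (h * b⁻¹ * h⁻¹) from hcomm).inv_left).eq.symm
    have key : a * (b * h * b⁻¹ * h⁻¹) * a⁻¹ * (b * h * b⁻¹ * h⁻¹)⁻¹ = ⁅a, b⁆ := by
      have step : a * (b * h * b⁻¹ * h⁻¹) * a⁻¹ * (b * h * b⁻¹ * h⁻¹)⁻¹ =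
          a * b * ((h * b⁻¹ * h⁻¹) * a⁻¹) * (h * b⁻¹ * h⁻¹)⁻¹ * b⁻¹ := by group
      rw [step, hc', commutatorElement_def]
      group
    exact key ▸ hm

end Aux2


section Aux3

variable {A : ℕ → Type}

lemma concat_fst (n : ℕ) (v : Vertex A) (hv : v.1 = n) (w : Vertex (shift A n)) :
    (concat A n v hv w).1 = n + w.1 := rfl

lemma isPref_concat (n : ℕ) (v : Vertex A) (hv : v.1 = n) (w : Vertex (shift A n)) :
    IsPref A v (concat A n v hv w) := by
  have hle : v.1 ≤ (concat A n v hv w).1 := by rw [concat_fst]; omega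
  refine ⟨hle, fun i => ?_⟩
  have hi : ((Fin.castLE hle i) : ℕ) < n := by
    have h1 : ((Fin.castLE hle i) : ℕ) = (i : ℕ) := rfl
    have := i.2; omega
  show v.2 i = dite _ _ _
  rw [dif_pos hi]
  rfl

lemma concat_injective (n : ℕ) (v : Vertex A) (hv : v.1 = n) :
    Function.Injective (concat A n v hv) := by
  intro w w' he
  obtain ⟨p, f⟩ := w
  obtain ⟨p', f'⟩ := w'
  have hp : p = p' := by
    have h1 : n + p = n + p' := congrArg Sigma.fst he
    omega
  subst hp
  have h2 : HEq (concat A n v hv ⟨p, f⟩).2 (concat A n v hv ⟨p, f'⟩).2 := by rw [he]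
  have h3 := eq_of_heq h2
  have hff : f = f' := by
    funext j
    have hjn : n + (j : ℕ) < n + p := by have := j.2; omega
    have h4 := congrFun h3 (⟨n + j.1, hjn⟩ : Fin (n + p))
    have hcond : ¬ ((⟨n + j.1, hjn⟩ : Fin (n + p)) : ℕ) < n := by simp
    have h5 : (concat A n v hv ⟨p, f⟩).2 (⟨n + j.1, hjn⟩ : Fin (n + p)) =
        cast (congrArg A (show n + (j : ℕ) - n + n = n + (j : ℕ) by omega))
          (f ⟨n + (j : ℕ) - n, by omega⟩) := by
      show dite _ _ _ = _
      rw [dif_neg hcond]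
    have h6 : (concat A n v hv ⟨p, f'⟩).2 (⟨n + j.1, hjn⟩ : Fin (n + p)) =
        cast (congrArg A (show n + (j : ℕ) - n + n = n + (j : ℕ) by omega))
          (f' ⟨n + (j : ℕ) - n, by omega⟩) := by
      show dite _ _ _ = _
      rw [dif_neg hcond]
    rw [h5, h6] at h4
    have h7 := (cast_inj _).mp h4
    have hidx : (⟨n + (j : ℕ) - n, by omega⟩ : Fin p) = j := Fin.ext (by simp)
    rw [← hidx]
    exact h7
  rw [hff]

end Aux3


/-- If `H₁, H₂` are commuting subnormal subgroups of a weakly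
branch group `G` and `H₂` is non-trivial, then there is a vertex `v` such that
`H₁ ≤ St_G(v)` and `φ_v(H₁) = 1`. -/
theorem exists_vertex_trivial_projection_of_commute
    (A : ℕ → Type) [∀ i, Fintype (A i)] (hcard : ∀ i, 2 ≤ Fintype.card (A i))
    (G H₁ H₂ : Subgroup (Perm (Vertex A))) (hG : IsWeaklyBranch A G)
    (k₁ : ℕ) (h1 : SubnormalIn H₁ G k₁) (k₂ : ℕ) (h2 : SubnormalIn H₂ G k₂)
    (hcomm : ⁅H₁, H₂⁆ = (⊥ : Subgroup (Perm (Vertex A))))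
    (hH₂ : H₂ ≠ ⊥) :
    ∃ v : Vertex A, H₁ ≤ stG A G v ∧ projStab A H₁ v.1 v rfl = ⊥ := by
  classical
  obtain ⟨h₂, hh₂, hne₂⟩ : ∃ g ∈ H₂, g ≠ 1 := by
    by_contra hc
    push_neg at hc
    exact hH₂ (le_bot_iff.mp fun g hg => Subgroup.mem_bot.mpr (hc g hg))
  obtain ⟨u, hu⟩ := exists_moved_of_ne_one hne₂
  have hH₁G : H₁ ≤ G := h1.le
  have key : ∀ g ∈ H₁, ∀ w, IsPref A u w → g w = w := by
    intro g hg w hpre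
    by_contra hne
    have hS1 : derivedIter (rist A G w) k₁ ≤ H₁ := subnormal_rist_le hG k₁ H₁ h1 g hg w hne
    have hS2 : derivedIter (rist A G u) k₂ ≤ H₂ := subnormal_rist_le hG k₂ H₂ h2 h₂ hh₂ u hu
    have hD1 : derivedIter (rist A G w) (max k₁ k₂) ≤ H₁ :=
      le_trans (derivedIter_antitone _ (le_max_left _ _)) hS1
    have hD2 : derivedIter (rist A G w) (max k₁ k₂) ≤ H₂ :=
      le_trans (le_trans (derivedIter_antitone _ (le_max_right _ _))
        (derivedIter_mono (rist_mono hpre) k₂)) hS2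
    have hab : derivedIter (rist A G w) (max k₁ k₂ + 1) ≤ ⊥ := by
      show ⁅derivedIter (rist A G w) (max k₁ k₂), derivedIter (rist A G w) (max k₁ k₂)⁆ ≤ ⊥
      refine Subgroup.commutator_le.mpr ?_
      intro g₁ hg₁ g₂ hg₂
      rw [← hcomm]
      exact Subgroup.commutator_mem_commutator (hD1 hg₁) (hD2 hg₂)
    obtain ⟨p, hp, xx, hxx⟩ := exists_moving hG (max k₁ k₂ + 1) w
    have hp1 : p = 1 := Subgroup.mem_bot.mp (hab hp)
    exact hxx (by rw [hp1]; rfl)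
  refine ⟨u, ?_, ?_⟩
  · intro g hg
    refine Subgroup.mem_inf.mpr ⟨hH₁G hg, MulAction.mem_stabilizer_iff.mpr ?_⟩
    show g • u = u
    rw [Perm.smul_def]
    exact key g hg u (isPref_refl u)
  · rw [eq_bot_iff]
    rintro σ ⟨g, hgH, hgu, hgw⟩
    have hσ : σ = 1 := by
      apply Equiv.ext
      intro w
      have h1' := hgw w
      rw [key g hgH _ (isPref_concat u.1 u rfl w)] at h1'
      exact (concat_injective u.1 u rfl h1'.symm)
    exact Subgroup.mem_bot.mpr hσ


end PaperDefs
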